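/- For group elements α, β and nonnegative integers m, n, define {α,β}_m = (αβ)^k(βα)^{-k} if m=2k is even, and {α,β}_m = ((αβ)^kα)((βα)^kβ)^{-1} if m=2k+1 is odd. Then in the free group on α, β, the normal closure of the set {{α,β}_m, {α,β}_n} equals the normal closure of {α,β}_{gcd(m,n)}. Equivalently, the quotient of the free group by the relations {α,β}_m = 1 and {α,β}_n = 1 is isomorphic to the quotient by the single relation {α,β}_{gcd(m,n)} = 1. -/

import Mathlib

/-- The bracket `{a,b}_m`: `(ab)^k (ba)^{-k}` for `m = 2k` and
`((ab)^k a)((ba)^k b)⁻¹` for `m = 2k+1`. -/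
def degtBracket {G : Type*} [Group G] (m : ℕ) (a b : G) : G :=
  if m % 2 = 0 then (a * b) ^ (m / 2) * ((b * a) ^ (m / 2))⁻¹
  else ((a * b) ^ (m / 2) * a) * ((b * a) ^ (m / 2) * b)⁻¹

namespace DegtAux

variable {G H : Type*} [Group G] [Group H]

lemma degt_step (m : ℕ) (a b : G) :
    degtBracket (m+2) a b = (a * b) * degtBracket m a b * (b * a)⁻¹ := by
  have h1 : (m+2) % 2 = m % 2 := by omega
  have h2 : (m+2) / 2 = m / 2 + 1 := by omega
  unfold degtBracket
  rw [h1, h2]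
  split <;> rw [pow_succ', pow_succ'] <;> generalize (a*b)^(m/2) = x <;>
    generalize (b*a)^(m/2) = y <;> group

/-- Auxiliary recursive word. -/
def W (a b : G) : ℕ → G
  | 0 => 1
  | (m+1) => a * (W a b m)⁻¹ * b⁻¹

lemma degt_eq_W (m : ℕ) (a b : G) : degtBracket m a b = W a b m := by
  induction m using Nat.twoStepInduction with
  | zero => simp [degtBracket, W]
  | one => simp [degtBracket, W]
  | more m ih _ih =>
      rw [degt_step, ih]
      show _ = a * (a * (W a b m)⁻¹ * b⁻¹)⁻¹ * b⁻¹
      group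

lemma degt_succ (m : ℕ) (a b : G) :
    degtBracket (m+1) a b = a * (degtBracket m a b)⁻¹ * b⁻¹ := by
  rw [degt_eq_W, degt_eq_W]; rfl

lemma degt_zero (a b : G) : degtBracket 0 a b = 1 := by simp [degtBracket]

/-- The braid substitution on pairs. -/
def T : G × G → G × G := fun p => (p.1 * p.2 * p.1⁻¹, p.1)

lemma T_mul (p : G × G) : (T p).1 * (T p).2 = p.1 * p.2 := by
  simp [T]

lemma iter_mul (m : ℕ) (p : G × G) :
    (T^[m] p).1 * (T^[m] p).2 = p.1 * p.2 := by
  induction m with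
  | zero => rfl
  | succ m ih => rw [Function.iterate_succ_apply', T_mul, ih]

lemma iter_fst (m : ℕ) (a b : G) :
    (T^[m] (a, b)).1 = a * (degtBracket m a b)⁻¹ := by
  induction m with
  | zero => simp [degt_zero]
  | succ m ih =>
      rw [Function.iterate_succ_apply']
      have h1 : (T (T^[m] (a,b))).1 = (T^[m] (a,b)).1 * (T^[m] (a,b)).2 * ((T^[m] (a,b)).1)⁻¹ := rfl
      rw [h1, iter_mul, ih, degt_succ]
      group

lemma iter_eq_self_iff (m : ℕ) (a b : G) :
    T^[m] (a, b) = (a, b) ↔ degtBracket m a b = 1 := by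
  constructor
  · intro h
    have h1 : (T^[m] (a, b)).1 = a := by rw [h]
    rw [iter_fst] at h1
    rwa [mul_eq_left, inv_eq_one] at h1
  · intro h
    have h1 : (T^[m] (a, b)).1 = a := by rw [iter_fst, h]; simp
    have h2 := iter_mul m (a, b)
    rw [h1] at h2
    have h3 : (T^[m] (a, b)).2 = b := by
      have := mul_left_cancel h2
      simpa using this
    exact Prod.ext h1 h3

lemma iter_fix_mul {m : ℕ} {p : G × G} (h : T^[m] p = p) (q : ℕ) :
    T^[m * q] p = p := by
  induction q with
  | zero => rfl
  | succ q ih => rw [Nat.mul_succ, Function.iterate_add_apply, h, ih]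

lemma iter_fix_mod {m n : ℕ} {p : G × G} (hm : T^[m] p = p) (hn : T^[n] p = p) :
    T^[n % m] p = p := by
  have h1 : T^[n % m + m * (n / m)] p = p := by rw [Nat.mod_add_div]; exact hn
  rwa [Function.iterate_add_apply, iter_fix_mul hm] at h1

lemma iter_fix_gcd {p : G × G} : ∀ {m n : ℕ}, T^[m] p = p → T^[n] p = p →
    T^[Nat.gcd m n] p = p := by
  intro m n
  induction m, n using Nat.gcd.induction with
  | H0 n' => intro _ hn; simpa using hn
  | H1 m' n' hpos ih =>
      intro hm hn
      rw [Nat.gcd_rec]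
      exact ih (iter_fix_mod hm hn) hm

lemma degt_gcd {m n : ℕ} {a b : G} (hm : degtBracket m a b = 1)
    (hn : degtBracket n a b = 1) : degtBracket (Nat.gcd m n) a b = 1 := by
  rw [← iter_eq_self_iff] at *
  exact iter_fix_gcd hm hn

lemma degt_of_dvd {d m : ℕ} {a b : G} (hdvd : d ∣ m)
    (h : degtBracket d a b = 1) : degtBracket m a b = 1 := by
  obtain ⟨q, rfl⟩ := hdvd
  rw [← iter_eq_self_iff] at *
  exact iter_fix_mul h q

lemma map_degt (f : G →* H) (m : ℕ) (a b : G) :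
    f (degtBracket m a b) = degtBracket m (f a) (f b) := by
  unfold degtBracket
  split <;> simp [map_mul, map_pow, map_inv]

end DegtAux

open DegtAux in
/-- In the free group on two generators, the normal closure of
`{α,β}_m` and `{α,β}_n` equals the normal closure of `{α,β}_{gcd(m,n)}`. -/
theorem bracket_normalClosure_gcd (m n : ℕ) :
    Subgroup.normalClosure
        ({degtBracket m (FreeGroup.of (0 : Fin 2)) (FreeGroup.of 1),
          degtBracket n (FreeGroup.of (0 : Fin 2)) (FreeGroup.of 1)} :
          Set (FreeGroup (Fin 2))) =
      Subgroup.normalClosure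
        ({degtBracket (Nat.gcd m n) (FreeGroup.of (0 : Fin 2)) (FreeGroup.of 1)} :
          Set (FreeGroup (Fin 2))) := by
  set α := FreeGroup.of (0 : Fin 2)
  set β := FreeGroup.of (1 : Fin 2)
  -- membership of a bracket in a normal closure via the quotient group
  have mem_iff : ∀ (k : ℕ) (S : Set (FreeGroup (Fin 2))),
      degtBracket k α β ∈ Subgroup.normalClosure S ↔
        degtBracket k (QuotientGroup.mk' (Subgroup.normalClosure S) α)
          (QuotientGroup.mk' (Subgroup.normalClosure S) β) = 1 := by
    intro k S
    rw [← map_degt (QuotientGroup.mk' (Subgroup.normalClosure S)) k α β,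
      ← MonoidHom.mem_ker, QuotientGroup.ker_mk']
  have hmem : ∀ (k : ℕ) (S : Set (FreeGroup (Fin 2))),
      degtBracket k α β ∈ S → degtBracket k α β ∈ Subgroup.normalClosure S :=
    fun k S h => Subgroup.subset_normalClosure h
  apply le_antisymm
  · apply Subgroup.normalClosure_le_normal
    intro x hx
    have hg : degtBracket (Nat.gcd m n) α β ∈
        Subgroup.normalClosure ({degtBracket (Nat.gcd m n) α β} :
          Set (FreeGroup (Fin 2))) :=
      hmem _ _ rfl
    rw [mem_iff] at hg
    simp only [Set.mem_insert_iff, Set.mem_singleton_iff] at hx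
    rcases hx with rfl | rfl
    · rw [SetLike.mem_coe, mem_iff]
      exact degt_of_dvd (Nat.gcd_dvd_left m n) hg
    · rw [SetLike.mem_coe, mem_iff]
      exact degt_of_dvd (Nat.gcd_dvd_right m n) hg
  · apply Subgroup.normalClosure_le_normal
    intro x hx
    rw [Set.mem_singleton_iff] at hx
    subst hx
    have hm : degtBracket m α β ∈
        Subgroup.normalClosure ({degtBracket m α β, degtBracket n α β} :
          Set (FreeGroup (Fin 2))) := hmem _ _ (Set.mem_insert _ _)
    have hn : degtBracket n α β ∈
        Subgroup.normalClosure ({degtBracket m α β, degtBracket n α β} :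
          Set (FreeGroup (Fin 2))) := hmem _ _ (Set.mem_insert_of_mem _ rfl)
    rw [mem_iff] at hm hn
    rw [SetLike.mem_coe, mem_iff]
    exact degt_gcd hm hn
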